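/- Every complete positive ordered abelian semigroup that satisfies the ω-comparison property also satisfies the Corona Factorization Property for semigroups. -/
import Mathlib


namespace Stmt2

variable {W : Type*} [AddCommSemigroup W] [PartialOrder W]

/-- `rep n x` is the `(n+1)`-fold sum `x + x + ⋯ + x`, so that `rep n x = (n+1)·x`. -/
def rep : ℕ → W → W
  | 0, x => x
  | n + 1, x => rep n x + x

/-- `sumTo y n = y 0 + y 1 + ⋯ + y n`. -/
def sumTo (y : ℕ → W) : ℕ → W
  | 0 => y 0
  | n + 1 => sumTo y n + y (n + 1)

/-- `x ∝ y` : `x ≤ n·y` for some positive integer `n` (encoded as `n + 1`, `n : ℕ`). -/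
def Propto (x y : W) : Prop := ∃ n : ℕ, x ≤ rep n y

/-- `x <_s y` : `(k+1)·x ≤ k·y` for some positive integer `k`. -/
def StDom (x y : W) : Prop := ∃ k : ℕ, rep (k + 1) x ≤ rep k y

/-- `x ≪ y` : for every increasing sequence whose supremum exists and dominates `y`,
some term of the sequence dominates `x`. -/
def CC (x y : W) : Prop :=
  ∀ f : ℕ → W, Monotone f → ∀ s : W, IsLUB (Set.range f) s → y ≤ s → ∃ n, x ≤ f n

/-- `W` is complete: every increasing sequence has a supremum, and `x ≤ y` holds as soon
as `x' ≤ y` for every `x' ≪ x`. -/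
def Complete (W : Type*) [AddCommSemigroup W] [PartialOrder W] : Prop :=
  (∀ f : ℕ → W, Monotone f → ∃ s : W, IsLUB (Set.range f) s) ∧
    ∀ x y : W, (∀ x' : W, CC x' x → x' ≤ y) → x ≤ y

/-- A full sequence: increasing, and for all `y' ≪ y` one has `y' ∝ x n` for some `n`. -/
def FullSeq (x : ℕ → W) : Prop :=
  Monotone x ∧ ∀ y' y : W, CC y' y → ∃ n, Propto y' (x n)

/-- A full element: `y' ∝ x` for all `y' ≪ y`. -/
def FullElem (x : W) : Prop := ∀ y' y : W, CC y' y → Propto y' x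

/-- The Corona Factorization Property for semigroups: for every full sequence `(x_n)`,
every sequence `(y_n)`, every `x' ≪ x_0` and every positive integer `m` (encoded `m+1`)
with `x_n ≤ m·y_n` for all `n`, one has `x' ≤ y_0 + ⋯ + y_k` for some `k`. -/
def CFP (W : Type*) [AddCommSemigroup W] [PartialOrder W] : Prop :=
  ∀ x : ℕ → W, FullSeq x → ∀ y : ℕ → W, ∀ x' : W, ∀ m : ℕ,
    CC x' (x 0) → (∀ n, x n ≤ rep m (y n)) → ∃ k, x' ≤ sumTo y k


/-- The ω-comparison property: whenever `x' ≪ x` and `x <_s y_j` for all `j`, then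
`x' ≤ y_0 + ⋯ + y_n` for some `n`. -/
def OmegaComparison (W : Type*) [AddCommSemigroup W] [PartialOrder W] : Prop :=
  ∀ x' x : W, ∀ y : ℕ → W, CC x' x → (∀ j, StDom x (y j)) → ∃ n, x' ≤ sumTo y n

lemma add_mono (hadd : ∀ x y z : W, x ≤ y → x + z ≤ y + z)
    {a b c d : W} (h1 : a ≤ b) (h2 : c ≤ d) : a + c ≤ b + d := by
  calc a + c ≤ b + c := hadd _ _ _ h1
    _ = c + b := add_comm _ _
    _ ≤ d + b := hadd _ _ _ h2
    _ = b + d := add_comm _ _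

lemma sumTo_mono (hadd : ∀ x y z : W, x ≤ y → x + z ≤ y + z)
    {f g : ℕ → W} (h : ∀ i, f i ≤ g i) : ∀ N, sumTo f N ≤ sumTo g N
  | 0 => h 0
  | N + 1 => add_mono hadd (sumTo_mono hadd h N) (h _)

lemma rep_eq_sumTo_const (x : W) : ∀ N, rep N x = sumTo (fun _ => x) N
  | 0 => rfl
  | N + 1 => by simp [rep, sumTo, rep_eq_sumTo_const x N]

lemma rep_add (a b : W) : ∀ n, rep n (a + b) = rep n a + rep n b
  | 0 => rfl
  | n + 1 => by
    simp only [rep, rep_add a b n]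
    exact add_add_add_comm _ _ _ _

lemma rep_sumTo (m : ℕ) (f : ℕ → W) :
    ∀ N, rep m (sumTo f N) = sumTo (fun i => rep m (f i)) N
  | 0 => rfl
  | N + 1 => by simp only [sumTo, rep_add, rep_sumTo m f N]

lemma sumTo_append (y : ℕ → W) (a : ℕ) :
    ∀ b, sumTo y a + sumTo (fun i => y (a + 1 + i)) b = sumTo y (a + 1 + b)
  | 0 => by simp [sumTo]
  | b + 1 => by
    have := sumTo_append y a b
    simp only [sumTo, ← add_assoc, this]
    rfl

/-- Proposition 2.17: every complete positive ordered abelian semigroup with the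
ω-comparison property satisfies the Corona Factorization Property for semigroups. -/
theorem cfp_of_omegaComparison
    (hadd : ∀ x y z : W, x ≤ y → x + z ≤ y + z)
    (hpos : ∀ x z : W, x ≤ x + z)
    (hcomplete : Complete W)
    (homega : OmegaComparison W) :
    CFP W := by
  intro x hfull y x' m hcc hle
  set z : ℕ → W := fun j => sumTo (fun i => y (j * (m + 2) + i)) (m + 1) with hz
  have hstd : ∀ j, StDom (x 0) (z j) := by
    intro j
    refine ⟨m, ?_⟩
    calc rep (m + 1) (x 0) = sumTo (fun _ => x 0) (m + 1) := rep_eq_sumTo_const _ _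
      _ ≤ sumTo (fun i => x (j * (m + 2) + i)) (m + 1) :=
          sumTo_mono hadd (fun i => hfull.1 (Nat.zero_le _)) _
      _ ≤ sumTo (fun i => rep m (y (j * (m + 2) + i))) (m + 1) :=
          sumTo_mono hadd (fun i => hle _) _
      _ = rep m (z j) := (rep_sumTo m _ _).symm
  obtain ⟨n, hn⟩ := homega x' (x 0) z hcc hstd
  have hsum : ∀ n, sumTo z n = sumTo y (n * (m + 2) + m + 1) := by
    intro n
    induction n with
    | zero =>
        show z 0 = _
        rw [hz]
        simp only [Nat.zero_mul, Nat.zero_add]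
    | succ n ih =>
        show sumTo z n + z (n + 1) = _
        rw [ih]
        simp only [hz]
        rw [show (n + 1) * (m + 2) = n * (m + 2) + m + 1 + 1 from by ring, sumTo_append]
        congr 1
  exact ⟨n * (m + 2) + m + 1, by rw [← hsum]; exact hn⟩

end Stmt2
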